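/- Let β: V × V → W be a flat symmetric bilinear form with respect to an inner product ⟨⟨·,·⟩⟩ on W (possibly indefinite), i.e., ⟨⟨β(X,Y), β(Z,V)⟩⟩ = ⟨⟨β(X,V), β(Z,Y)⟩⟩ for all X,Y,Z,V. If Z₀ is a regular element of β (i.e., dim B_{Z₀}(V) is maximal, where B_Y = β(Y,·)), then for any X ∈ V and Y ∈ ker B_{Z₀}, the vector β(X,Y) lies in B_{Z₀}(V) ∩ (B_{Z₀}(V))^⊥. -/
import Mathlib

open Module Submodule Matrix

/-- Auxiliary: the range part of Moore's lemma (pure linear algebra, no flatness needed). -/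
theorem moore_range_aux
    (V W : Type*) [AddCommGroup V] [Module ℝ V] [FiniteDimensional ℝ V]
    [AddCommGroup W] [Module ℝ W] [FiniteDimensional ℝ W]
    (β : V →ₗ[ℝ] V →ₗ[ℝ] W)
    (Z₀ : V)
    (hreg : ∀ X : V, Module.finrank ℝ (LinearMap.range (β X)) ≤
      Module.finrank ℝ (LinearMap.range (β Z₀)))
    (X Y : V) (hY : β Z₀ Y = 0) :
    β X Y ∈ LinearMap.range (β Z₀) := by
  classical
  set r := Module.finrank ℝ (LinearMap.range (β Z₀)) with hrdef
  let s : Basis (Fin r) ℝ (LinearMap.range (β Z₀)) := Module.finBasis ℝ _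
  choose e he using fun i => LinearMap.mem_range.mp (s i).2
  obtain ⟨q, hq⟩ := Submodule.exists_isCompl (LinearMap.range (β Z₀))
  let π : W →ₗ[ℝ] LinearMap.range (β Z₀) := Submodule.linearProjOfIsCompl _ q hq
  let P : W →ₗ[ℝ] (Fin r → ℝ) := s.equivFun.toLinearMap.comp π
  have hP : ∀ i j, P (β Z₀ (e i)) j = if i = j then 1 else 0 := by
    intro i j
    have h1 : π (β Z₀ (e i)) = s i := by
      rw [he]
      exact Submodule.linearProjOfIsCompl_apply_left hq (s i)
    simp only [P, LinearMap.comp_apply, LinearEquiv.coe_toLinearMap, h1,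
      Basis.equivFun_self]
  set u : Fin r → W := fun i => β Z₀ (e i) with hu
  set v : Fin r → W := fun i => β X (e i) with hv
  set w : W := β X Y with hw
  set A : Matrix (Fin r) (Fin r) ℝ := Matrix.of (fun i j => P (v j) i) with hA
  set M : ℝ → Matrix (Fin r) (Fin r) ℝ := fun t => 1 + t • A with hMdef
  have hMentry : ∀ t i j, P (β (Z₀ + t • X) (e j)) i = M t i j := by
    intro t i j
    have : β (Z₀ + t • X) (e j) = u j + t • v j := by
      simp [hu, hv, map_add, _root_.map_smul]
    rw [this, map_add, _root_.map_smul]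
    simp only [hMdef, Matrix.add_apply, Matrix.smul_apply, Matrix.one_apply, hA,
      Matrix.of_apply, Pi.add_apply, Pi.smul_apply, smul_eq_mul]
    rw [hP]
    congr 1
    by_cases h : j = i
    · simp [h]
    · rw [if_neg h, if_neg (fun hh => h hh.symm)]
  -- the key claim for each good t
  have hkey : ∀ t : ℝ, t ≠ 0 → (M t).det ≠ 0 →
      (M t).det • w = ∑ i, ((M t).adjugate *ᵥ (P w)) i • u i
        + ∑ i, (t * ((M t).adjugate *ᵥ (P w)) i) • v i := by
    intro t ht hdet
    set f : Fin r → W := fun i => β (Z₀ + t • X) (e i) with hf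
    have hfuv : ∀ i, f i = u i + t • v i := by
      intro i; simp [hf, hu, hv, map_add, _root_.map_smul]
    have hfind : LinearIndependent ℝ f := by
      rw [Fintype.linearIndependent_iff]
      intro g hg i
      have hPg : ∀ i0, (M t *ᵥ g) i0 = 0 := by
        intro i0
        have h0 := congrArg (fun z => P z i0) hg
        simp only [map_sum, _root_.map_smul, Finset.sum_apply, Pi.smul_apply, smul_eq_mul,
          map_zero, Pi.zero_apply] at h0
        rw [Matrix.mulVec, dotProduct]
        refine Eq.trans (Finset.sum_congr rfl fun j _ => ?_) h0
        simp only [hf]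
        rw [hMentry t i0 j]; ring
      have hMg : M t *ᵥ g = 0 := funext hPg
      have := congrArg (fun z => (M t).adjugate *ᵥ z) hMg
      simp only [Matrix.mulVec_mulVec, Matrix.adjugate_mul, Matrix.mulVec_zero] at this
      have : (M t).det • g = 0 := by
        rw [← this, Matrix.smul_mulVec, Matrix.one_mulVec]
      have := congrFun this i
      simp only [Pi.smul_apply, smul_eq_mul, Pi.zero_apply] at this
      exact (mul_eq_zero.mp this).resolve_left hdet
    have hspan : Submodule.span ℝ (Set.range f) = LinearMap.range (β (Z₀ + t • X)) := by
      apply Submodule.eq_of_le_of_finrank_le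
      · rw [Submodule.span_le]
        rintro _ ⟨i, rfl⟩
        exact LinearMap.mem_range_self _ _
      · calc Module.finrank ℝ (LinearMap.range (β (Z₀ + t • X))) ≤ r := hreg _
          _ = Module.finrank ℝ (Submodule.span ℝ (Set.range f)) := by
              rw [finrank_span_eq_card hfind, Fintype.card_fin]
    have hwmem : w ∈ Submodule.span ℝ (Set.range f) := by
      have h1 : β (Z₀ + t • X) Y = t • w := by
        simp [hw, map_add, _root_.map_smul, hY]
      have h2 : t • w ∈ Submodule.span ℝ (Set.range f) := by
        rw [hspan]; exact ⟨Y, h1⟩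
      have := Submodule.smul_mem _ t⁻¹ h2
      rwa [smul_smul, inv_mul_cancel₀ ht, one_smul] at this
    obtain ⟨a, ha⟩ := (mem_span_range_iff_exists_fun ℝ).mp hwmem
    -- apply P : P w = M t *ᵥ a
    have hPw : ∀ i0, P w i0 = (M t *ᵥ a) i0 := by
      intro i0
      have h0 := congrArg (fun z => P z i0) ha
      simp only [map_sum, _root_.map_smul, Finset.sum_apply, Pi.smul_apply, smul_eq_mul] at h0
      rw [← h0, Matrix.mulVec, dotProduct]
      refine Finset.sum_congr rfl fun j _ => ?_
      simp only [hf]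
      rw [hMentry t i0 j]; ring
    have hadj : (M t).adjugate *ᵥ (P w) = (M t).det • a := by
      rw [funext hPw, Matrix.mulVec_mulVec, Matrix.adjugate_mul,
        Matrix.smul_mulVec, Matrix.one_mulVec]
    rw [hadj]
    calc (M t).det • w = (M t).det • ∑ i, a i • f i := by rw [ha]
      _ = ∑ i, ((M t).det • a) i • u i + ∑ i, (t * ((M t).det • a) i) • v i := by
          rw [Finset.smul_sum, ← Finset.sum_add_distrib]
          refine Finset.sum_congr rfl fun i _ => ?_
          rw [hfuv]
          simp only [Pi.smul_apply, smul_eq_mul, smul_add, smul_smul]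
          ring_nf
  -- continuity and limit t → 0
  have hMcont : Continuous M := by
    apply continuous_pi; intro i; apply continuous_pi; intro j
    simp only [hMdef, Matrix.add_apply, Matrix.smul_apply, smul_eq_mul]
    exact continuous_const.add (continuous_id.mul continuous_const)
  have hdetcont : Continuous fun t => (M t).det := hMcont.matrix_det
  have hadjcont : Continuous fun t => (M t).adjugate := hMcont.matrix_adjugate
  have hM0 : M 0 = 1 := by simp [hMdef]
  -- the good set
  set S : Set ℝ := {t | t ≠ 0 ∧ (M t).det ≠ 0} with hSdef
  have hclosure : (0 : ℝ) ∈ closure S := by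
    have h0U : {t : ℝ | (M t).det ≠ 0} ∈ nhds (0 : ℝ) := by
      refine (isOpen_ne.preimage hdetcont).mem_nhds ?_
      simp [hM0]
    rw [mem_closure_iff_nhdsWithin_neBot]
    have hSS : S = {t : ℝ | t ≠ 0} ∩ {t : ℝ | (M t).det ≠ 0} := rfl
    rw [hSS, nhdsWithin_inter_of_mem' (mem_nhdsWithin_of_mem_nhds h0U)]
    have : {t : ℝ | t ≠ 0} = {(0 : ℝ)}ᶜ := by ext t; simp
    rw [this]
    exact inferInstance
  -- for each dual functional, a continuous scalar function vanishing on S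
  have hfinal : ∀ φ : Module.Dual ℝ W, φ (w - ∑ i, P w i • u i) = 0 := by
    intro φ
    set h : ℝ → ℝ := fun t => (M t).det * φ w
      - ∑ i, ((M t).adjugate *ᵥ (P w)) i * (φ (u i) + t * φ (v i)) with hhdef
    have hcont : Continuous h := by
      apply Continuous.sub
      · exact hdetcont.mul continuous_const
      · apply continuous_finset_sum
        intro i _
        have h1 : Continuous fun t => ((M t).adjugate *ᵥ (P w)) i :=
          (continuous_apply i).comp (hadjcont.matrix_mulVec continuous_const)
        exact h1.mul (continuous_const.add (continuous_id.mul continuous_const))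
    have hzero : Set.EqOn h 0 S := by
      rintro t ⟨ht, hdet⟩
      have := congrArg φ (hkey t ht hdet)
      simp only [map_add, map_sum, _root_.map_smul, smul_eq_mul] at this
      simp only [hhdef, Pi.zero_apply]
      rw [sub_eq_zero, this, ← Finset.sum_add_distrib]
      refine Finset.sum_congr rfl fun i _ => by ring
    have h0 : h 0 = 0 := hzero.closure hcont continuous_const hclosure
    simp only [hhdef, hM0, Matrix.det_one, Matrix.adjugate_one, Matrix.one_mulVec,
      one_mul, zero_mul, add_zero] at h0
    rw [map_sub, map_sum, sub_eq_zero]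
    simp only [_root_.map_smul, smul_eq_mul]
    linarith [h0]
  have := (Module.forall_dual_apply_eq_zero_iff ℝ _).mp hfinal
  have hwe : w = ∑ i, P w i • u i := by
    rw [← sub_eq_zero]; exact this
  rw [hwe]
  exact Submodule.sum_mem _ fun i _ => Submodule.smul_mem _ _ (LinearMap.mem_range_self _ _)

theorem stmt_2
    (V W : Type*) [AddCommGroup V] [Module ℝ V] [FiniteDimensional ℝ V]
    [AddCommGroup W] [Module ℝ W] [FiniteDimensional ℝ W]
    (b : W →ₗ[ℝ] W →ₗ[ℝ] ℝ) (hb : ∀ x y : W, b x y = b y x)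
    (β : V →ₗ[ℝ] V →ₗ[ℝ] W) (hβsymm : ∀ x y : V, β x y = β y x)
    (hflat : ∀ X Y Z T : V, b (β X Y) (β Z T) = b (β X T) (β Z Y))
    (Z₀ : V)
    (hreg : ∀ X : V, Module.finrank ℝ (LinearMap.range (β X)) ≤
      Module.finrank ℝ (LinearMap.range (β Z₀)))
    (X Y : V) (hY : β Z₀ Y = 0) :
    β X Y ∈ LinearMap.range (β Z₀) ∧
      ∀ w ∈ LinearMap.range (β Z₀), b (β X Y) w = 0 := by
  refine ⟨moore_range_aux V W β Z₀ hreg X Y hY, ?_⟩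
  rintro w ⟨T, rfl⟩
  rw [hflat X Y Z₀ T, hY, map_zero]
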